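/- Every multi-demand market with strictly positive item valuations that has at most two optimal allocations admits a dynamic pricing: there exists p ∈ ℝ^X with p_x > 0 for all x such that for every player i and every bundle S that is in demand for i under p, some optimal allocation assigns exactly the bundle S to player i. -/

import Mathlib

open Finset

set_option linter.unusedSectionVars false
set_option linter.unusedTactic false
set_option linter.unreachableTactic false
set_option linter.unnecessarySeqFocus false
set_option linter.unusedVariables false
set_option maxHeartbeats 1600000

/-- The value of a bundle `S` for a player with demand `k` and item valuations `v`:
the maximum, over subsets `T ⊆ S` with `|T| ≤ k`, of the total value of `T`. -/
noncomputable def bundleValue {X : Type*} [DecidableEq X] (k : ℕ) (v : X → ℝ)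
    (S : Finset X) : ℝ :=
  ((S.powerset.filter (fun T => T.card ≤ k)).image (fun T => ∑ x ∈ T, v x)).max'
    (Finset.Nonempty.image ⟨∅, by simp⟩ _)

/-- An allocation: a partition of the items where player `i` gets exactly `k i` items. -/
def IsAllocation {X I : Type*} (k : I → ℕ) (O : I → Finset X) : Prop :=
  (∀ i, (O i).card = k i) ∧ (∀ x : X, ∃! i, x ∈ O i)

/-- Social welfare of an allocation. -/
noncomputable def socialWelfare {X I : Type*} [DecidableEq X] [Fintype I]
    (v : I → X → ℝ) (k : I → ℕ) (O : I → Finset X) : ℝ :=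
  ∑ i, bundleValue (k i) (v i) (O i)

/-- An optimal allocation: an allocation maximizing social welfare. -/
def IsOptimal {X I : Type*} [DecidableEq X] [Fintype I]
    (v : I → X → ℝ) (k : I → ℕ) (O : I → Finset X) : Prop :=
  IsAllocation k O ∧
    ∀ O' : I → Finset X, IsAllocation k O' → socialWelfare v k O' ≤ socialWelfare v k O

section BV
variable {X : Type*} [DecidableEq X] (k : ℕ) (v : X → ℝ) (S : Finset X)

lemma bundleValue_spec : ∃ T, T ⊆ S ∧ T.card ≤ k ∧ bundleValue k v S = ∑ x ∈ T, v x := by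
  have h := Finset.max'_mem _ (Finset.Nonempty.image ⟨∅, by simp⟩
    (fun T => ∑ x ∈ T, v x) : ((S.powerset.filter (fun T => T.card ≤ k)).image
      (fun T => ∑ x ∈ T, v x)).Nonempty)
  rw [Finset.mem_image] at h
  obtain ⟨T, hT, hval⟩ := h
  rw [Finset.mem_filter, Finset.mem_powerset] at hT
  exact ⟨T, hT.1, hT.2, hval.symm⟩

lemma le_bundleValue {T : Finset X} (hT : T ⊆ S) (hc : T.card ≤ k) :
    ∑ x ∈ T, v x ≤ bundleValue k v S := by
  apply Finset.le_max'
  exact Finset.mem_image_of_mem _ (by simp [Finset.mem_filter, Finset.mem_powerset, hT, hc])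

lemma bundleValue_eq_sum (h : S.card ≤ k) (hv : ∀ x ∈ S, 0 ≤ v x) :
    bundleValue k v S = ∑ x ∈ S, v x := by
  apply le_antisymm
  · apply Finset.max'_le
    intro y hy
    rw [Finset.mem_image] at hy
    obtain ⟨T, hT, rfl⟩ := hy
    rw [Finset.mem_filter, Finset.mem_powerset] at hT
    exact Finset.sum_le_sum_of_subset_of_nonneg hT.1 (fun x hx _ => hv x hx)
  · exact le_bundleValue k v S Subset.rfl h

end BV

section DEM
variable {X : Type*} [DecidableEq X]

omit [DecidableEq X] in
lemma sum_le_card_mul {s : Finset X} {f : X → ℝ} {M : ℝ} (h : ∀ x ∈ s, f x ≤ M) :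
    ∑ x ∈ s, f x ≤ (s.card : ℝ) * M := by
  calc ∑ x ∈ s, f x ≤ ∑ _x ∈ s, M := Finset.sum_le_sum h
  _ = (s.card : ℝ) * M := by rw [Finset.sum_const, nsmul_eq_mul]

omit [DecidableEq X] in
lemma card_mul_le_sum {s : Finset X} {f : X → ℝ} {M : ℝ} (h : ∀ x ∈ s, M ≤ f x) :
    (s.card : ℝ) * M ≤ ∑ x ∈ s, f x := by
  calc (s.card : ℝ) * M = ∑ _x ∈ s, M := by rw [Finset.sum_const, nsmul_eq_mul]
  _ ≤ ∑ x ∈ s, f x := Finset.sum_le_sum h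

lemma demand_lemma {k : ℕ} (hk : 1 ≤ k) {v p : X → ℝ}
    (hp : ∀ x, 0 < p x) (hv : ∀ x, 0 < v x) {C : Finset X} {a b : X}
    (haC : a ∉ C) (hbC : b ∉ C) (hcard : C.card = k - 1)
    (h1 : ∀ x ∈ C, v a - p a < v x - p x)
    (h2 : 0 < v a - p a)
    (h3 : ∀ y, y ∉ C → y ≠ a → y ≠ b → v y - p y < v a - p a)
    {S : Finset X}
    (hS : ∀ S', bundleValue k v S' - ∑ x ∈ S', p x ≤ bundleValue k v S - ∑ x ∈ S, p x) :
    S = insert a C ∨ S = insert b C := by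
  classical
  set s : X → ℝ := fun x => v x - p x with hs
  have h2' : 0 < s a := h2
  have h1' : ∀ x ∈ C, s a < s x := h1
  have h3' : ∀ y, y ∉ C → y ≠ a → y ≠ b → s y < s a := h3
  have hCk : C.card + 1 = k := by omega
  have hins : ∀ c : X, c ∉ C →
      bundleValue k v (insert c C) - ∑ x ∈ insert c C, p x = s c + ∑ x ∈ C, s x := by
    intro c hc
    rw [bundleValue_eq_sum k v _ (by rw [Finset.card_insert_of_notMem hc, hCk])
      (fun x _ => (hv x).le)]
    rw [Finset.sum_insert hc, Finset.sum_insert hc]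
    have : ∑ x ∈ C, s x = ∑ x ∈ C, v x - ∑ x ∈ C, p x := by
      simp only [hs]; rw [Finset.sum_sub_distrib]
    rw [this]; simp only [hs]; ring
  obtain ⟨T, hTS, hTk, hbv⟩ := bundleValue_spec k v S
  have hST : S = T := by
    by_contra hne
    obtain ⟨x, hxS, hxT⟩ : ∃ x, x ∈ S ∧ x ∉ T := by
      by_contra hall
      push_neg at hall
      exact hne (Finset.Subset.antisymm (fun y hy => hall y hy) hTS)
    have hsub : insert x T ⊆ S := Finset.insert_subset hxS hTS
    have hps : ∑ y ∈ T, p y + p x ≤ ∑ y ∈ S, p y := by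
      have := Finset.sum_le_sum_of_subset_of_nonneg hsub (fun y _ _ => (hp y).le)
      rwa [Finset.sum_insert hxT, add_comm] at this
    have hsT : ∑ y ∈ T, s y = ∑ y ∈ T, v y - ∑ y ∈ T, p y := by
      simp only [hs]; rw [Finset.sum_sub_distrib]
    have hub : bundleValue k v S - ∑ y ∈ S, p y < ∑ y ∈ T, s y := by
      rw [hbv]; have hpx := hp x; linarith
    have hut : ∑ y ∈ T, s y ≤ bundleValue k v T - ∑ y ∈ T, p y := by
      rw [hsT]
      have := le_bundleValue k v T (Finset.Subset.rfl) hTk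
      linarith
    have := hS T
    linarith
  subst hST
  have huS : bundleValue k v S - ∑ x ∈ S, p x = ∑ x ∈ S, s x := by
    rw [hbv]
    have : ∑ x ∈ S, s x = ∑ x ∈ S, v x - ∑ x ∈ S, p x := by
      simp only [hs]; rw [Finset.sum_sub_distrib]
    linarith
  have hua : s a + ∑ x ∈ C, s x ≤ ∑ x ∈ S, s x := by
    have := hS (insert a C); rw [hins a haC] at this; linarith [huS]
  have hub : s b + ∑ x ∈ C, s x ≤ ∑ x ∈ S, s x := by
    have := hS (insert b C); rw [hins b hbC] at this; linarith [huS]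
  set CT := S ∩ C with hCT
  set Cm := C \ S with hCm
  set Q := (S \ C).erase b with hQ
  have hCsplit : ∑ x ∈ CT, s x + ∑ x ∈ Cm, s x = ∑ x ∈ C, s x := by
    rw [hCT, hCm, Finset.inter_comm]
    exact Finset.sum_inter_add_sum_sdiff C S s
  have hCcard : CT.card + Cm.card = C.card := by
    rw [hCT, hCm, Finset.inter_comm]
    exact Finset.card_inter_add_card_sdiff C S
  have hSsplit : ∑ x ∈ S, s x = ∑ x ∈ CT, s x + ∑ x ∈ S \ C, s x := by
    rw [hCT]
    exact (Finset.sum_inter_add_sum_sdiff S C s).symm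
  have hScard : S.card = CT.card + (S \ C).card := by
    rw [hCT]
    exact (Finset.card_inter_add_card_sdiff S C).symm
  have hQa : ∀ y ∈ Q, s y ≤ s a := by
    intro y hy
    rw [hQ, Finset.mem_erase, Finset.mem_sdiff] at hy
    rcases eq_or_ne y a with rfl | hya
    · exact le_rfl
    · exact (h3' y hy.2.2 hya hy.1).le
  have hCma : ∀ x ∈ Cm, s a ≤ s x := by
    intro x hx
    rw [hCm, Finset.mem_sdiff] at hx
    exact (h1' x hx.1).le
  have hCmstrict : Cm.Nonempty → (Cm.card : ℝ) * s a < ∑ x ∈ Cm, s x := by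
    rintro ⟨x, hx⟩
    have hxC : x ∈ C := (Finset.mem_sdiff.mp hx).1
    have hsum : ∑ y ∈ Cm, s y = ∑ y ∈ Cm.erase x, s y + s x := by
      rw [Finset.sum_erase_add _ _ hx]
    have hx1 := h1' x hxC
    have hrest : ((Cm.erase x).card : ℝ) * s a ≤ ∑ y ∈ Cm.erase x, s y :=
      card_mul_le_sum (fun y hy => hCma y (Finset.mem_of_mem_erase hy))
    have hce : (Cm.erase x).card = Cm.card - 1 := Finset.card_erase_of_mem hx
    have hcpos : 1 ≤ Cm.card := Finset.card_pos.mpr ⟨x, hx⟩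
    have hcast : ((Cm.erase x).card : ℝ) = (Cm.card : ℝ) - 1 := by
      rw [hce]; push_cast [hcpos]; ring
    rw [hcast] at hrest
    have hring : (Cm.card : ℝ) * s a = ((Cm.card : ℝ) - 1) * s a + s a := by ring
    linarith
  rcases Finset.decidableMem b S with hbS | hbS
  case _ =>
    have hQSC : Q = S \ C := by
      rw [hQ]
      exact Finset.erase_eq_of_notMem (fun hm => hbS (Finset.mem_sdiff.mp hm).1)
    have huSQ : ∑ x ∈ S, s x = ∑ x ∈ CT, s x + ∑ x ∈ Q, s x := by rw [hSsplit, hQSC]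
    have hQne : Q.Nonempty := by
      rcases Finset.eq_empty_or_nonempty Q with hQe | h
      · exfalso
        have hCmnn : (0:ℝ) ≤ ∑ x ∈ Cm, s x :=
          Finset.sum_nonneg (fun x hx => le_trans h2'.le (hCma x hx))
        rw [huSQ, hQe, Finset.sum_empty] at hua
        linarith
      · exact h
    have hq1 : 1 ≤ Q.card := Finset.card_pos.mpr hQne
    have hQc : Q.card = (S \ C).card := by rw [hQSC]
    have hcount : Q.card ≤ Cm.card + 1 := by omega
    have hQle : ∑ x ∈ Q, s x ≤ (Q.card : ℝ) * s a := sum_le_card_mul hQa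
    have hCmge : (Cm.card : ℝ) * s a ≤ ∑ x ∈ Cm, s x := card_mul_le_sum hCma
    have hCmempty : Cm = ∅ := by
      by_contra hne
      have hlt := hCmstrict (Finset.nonempty_of_ne_empty hne)
      have hcast : (Q.card : ℝ) ≤ (Cm.card : ℝ) + 1 := by exact_mod_cast hcount
      have hmul : (Q.card : ℝ) * s a ≤ ((Cm.card : ℝ) + 1) * s a :=
        mul_le_mul_of_nonneg_right hcast h2'.le
      have hring : ((Cm.card : ℝ) + 1) * s a = (Cm.card : ℝ) * s a + s a := by ring
      linarith
    have hCS : ∑ x ∈ Cm, s x = 0 := by rw [hCmempty]; simp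
    have hCmz : Cm.card = 0 := by rw [hCmempty]; simp
    have hQcard1 : Q.card = 1 := by omega
    obtain ⟨y, hy⟩ := Finset.card_eq_one.mp hQcard1
    have hya : y = a := by
      by_contra hya
      have hyQ : y ∈ Q := by rw [hy]; simp
      have hyprop : s y < s a := by
        rw [hQSC, Finset.mem_sdiff] at hyQ
        refine h3' y hyQ.2 hya ?_
        rintro rfl; exact hbS hyQ.1
      rw [hy, Finset.sum_singleton] at huSQ
      linarith
    left
    have hCsubS : C ⊆ S := by
      intro x hx
      by_contra hxS
      have : x ∈ Cm := Finset.mem_sdiff.mpr ⟨hx, hxS⟩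
      rw [hCmempty] at this; simp at this
    apply Finset.Subset.antisymm
    · intro x hx
      by_cases hxC : x ∈ C
      · exact Finset.mem_insert_of_mem hxC
      · have : x ∈ Q := by rw [hQSC]; exact Finset.mem_sdiff.mpr ⟨hx, hxC⟩
        rw [hy, hya] at this
        simp at this
        simp [this]
    · apply Finset.insert_subset _ hCsubS
      have : a ∈ Q := by rw [hy, hya]; simp
      rw [hQSC] at this
      exact (Finset.mem_sdiff.mp this).1
  case _ =>
    have hbSC : b ∈ S \ C := Finset.mem_sdiff.mpr ⟨hbS, hbC⟩
    have hQsum : ∑ x ∈ S \ C, s x = ∑ x ∈ Q, s x + s b := by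
      rw [hQ]; exact (Finset.sum_erase_add _ _ hbSC).symm
    have hQcard : (S \ C).card = Q.card + 1 := by
      rw [hQ, Finset.card_erase_of_mem hbSC]
      have : 1 ≤ (S \ C).card := Finset.card_pos.mpr ⟨b, hbSC⟩
      omega
    have hcount : Q.card ≤ Cm.card := by omega
    have hQle : ∑ x ∈ Q, s x ≤ (Q.card : ℝ) * s a := sum_le_card_mul hQa
    have hCmge : (Cm.card : ℝ) * s a ≤ ∑ x ∈ Cm, s x := card_mul_le_sum hCma
    have hCmempty : Cm = ∅ := by
      by_contra hne
      have hlt := hCmstrict (Finset.nonempty_of_ne_empty hne)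
      have hcast : (Q.card : ℝ) ≤ (Cm.card : ℝ) := by exact_mod_cast hcount
      have hmul : (Q.card : ℝ) * s a ≤ (Cm.card : ℝ) * s a :=
        mul_le_mul_of_nonneg_right hcast h2'.le
      linarith
    have hCmz : Cm.card = 0 := by rw [hCmempty]; simp
    have hQempty : Q = ∅ := by
      rcases Finset.eq_empty_or_nonempty Q with h | hQne
      · exact h
      · exfalso
        obtain ⟨y, hyQ⟩ := hQne
        have : 1 ≤ Q.card := Finset.card_pos.mpr ⟨y, hyQ⟩
        omega
    right
    have hCsubS : C ⊆ S := by
      intro x hx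
      by_contra hxS
      have : x ∈ Cm := Finset.mem_sdiff.mpr ⟨hx, hxS⟩
      rw [hCmempty] at this; simp at this
    apply Finset.Subset.antisymm
    · intro x hx
      by_cases hxC : x ∈ C
      · exact Finset.mem_insert_of_mem hxC
      · have hxSC : x ∈ S \ C := Finset.mem_sdiff.mpr ⟨hx, hxC⟩
        have : x = b := by
          by_contra hxb
          have : x ∈ Q := by rw [hQ]; exact Finset.mem_erase.mpr ⟨hxb, hxSC⟩
          rw [hQempty] at this; simp at this
        simp [this]
    · exact Finset.insert_subset hbS hCsubS
end DEM

section PATH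
variable {V : Type*} [DecidableEq V]

def pathW (c : V → V → ℝ) : V → List V → ℝ
  | _, [] => 0
  | a, b :: l => c a b + pathW c b l

@[simp] lemma pathW_nil (c : V → V → ℝ) (a : V) : pathW c a [] = 0 := rfl
@[simp] lemma pathW_cons (c : V → V → ℝ) (a b : V) (l : List V) :
    pathW c a (b :: l) = c a b + pathW c b l := rfl

lemma pathW_append (c : V → V → ℝ) :
    ∀ (l₁ : List V) (a b : V) (l₂ : List V),
      pathW c a (l₁ ++ b :: l₂) = pathW c a (l₁ ++ [b]) + pathW c b l₂
  | [], a, b, l₂ => by simp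
  | x :: l₁, a, b, l₂ => by
      simp only [List.cons_append, pathW_cons, pathW_append c l₁ x b l₂]
      ring

inductive Ins (v₀ : V) : List V → List V → Prop
  | nil : Ins v₀ [] []
  | keep (x : V) {l l' : List V} : Ins v₀ l l' → Ins v₀ (x :: l) (x :: l')
  | ins {x : V} {l l' : List V} : Ins v₀ (x :: l) l' → Ins v₀ (x :: l) (v₀ :: l')

lemma Ins_nil {v₀ : V} {l' : List V} (h : Ins v₀ [] l') : l' = [] := by
  cases h; rfl

lemma Ins_mem {v₀ : V} {l l' : List V} (h : Ins v₀ l l') :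
    ∀ x ∈ l', x ∈ l ∨ x = v₀ := by
  induction h with
  | nil => intro x hx; simp at hx
  | keep y h ih =>
      intro x hx
      rcases List.mem_cons.mp hx with rfl | hx
      · exact Or.inl (List.mem_cons_self)
      · rcases ih x hx with h' | h'
        · exact Or.inl (List.mem_cons_of_mem _ h')
        · exact Or.inr h'
  | ins h ih =>
      intro x hx
      rcases List.mem_cons.mp hx with rfl | hx
      · exact Or.inr rfl
      · exact ih x hx

lemma Ins_filter {v₀ : V} {l l' : List V} (h : Ins v₀ l l') :
    l'.filter (fun x => x ≠ v₀) = l.filter (fun x => x ≠ v₀) := by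
  induction h with
  | nil => rfl
  | keep y h ih =>
      simp only [List.filter_cons]
      rw [ih]
  | ins h ih =>
      rw [← ih]
      simp [List.filter_cons]

lemma Ins_last {v₀ : V} {l l' : List V} (h : Ins v₀ l l') :
    ∀ (m : List V) (x : V), l = m ++ [x] → ∃ u, l' = u ++ [x] := by
  induction h with
  | nil => intro m x hm; exact absurd hm (by simp)
  | keep y h ih =>
      intro m x hm
      cases m with
      | nil =>
          simp at hm
          obtain ⟨rfl, rfl⟩ := hm
          rw [Ins_nil h]
          exact ⟨[], rfl⟩
      | cons z m' =>
          simp at hm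
          obtain ⟨rfl, hm'⟩ := hm
          obtain ⟨u, hu⟩ := ih m' x hm'
          exact ⟨y :: u, by simp [hu]⟩
  | ins h ih =>
      intro m x hm
      obtain ⟨u, hu⟩ := ih m x hm
      exact ⟨v₀ :: u, by simp [hu]⟩

lemma expand (c : V → V → ℝ) (v₀ : V) :
    ∀ (l : List V) (a : V), ∃ l',
      pathW (fun x y => max (c x y) (c x v₀ + c v₀ y)) a l = pathW c a l' ∧ Ins v₀ l l'
  | [], _ => ⟨[], rfl, Ins.nil⟩
  | b :: l, a => by
      obtain ⟨l₂, hval, hins⟩ := expand c v₀ l b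
      rcases le_total (c a v₀ + c v₀ b) (c a b) with hle | hle
      · refine ⟨b :: l₂, ?_, Ins.keep b hins⟩
        simp only [pathW_cons, hval]
        rw [max_eq_left hle]
      · refine ⟨v₀ :: b :: l₂, ?_, Ins.ins (Ins.keep b hins)⟩
        simp only [pathW_cons, hval]
        rw [max_eq_right hle]
        ring

lemma first_split {v₀ : V} {u : List V} (h : v₀ ∈ u) :
    ∃ t r, u = t ++ v₀ :: r ∧ v₀ ∉ t := by
  induction u with
  | nil => simp at h
  | cons x u ih =>
      by_cases hx : x = v₀
      · exact ⟨[], u, by simp [hx], by simp⟩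
      · rcases List.mem_cons.mp h with h' | h'
        · exact absurd h'.symm hx
        · obtain ⟨t, r, rfl, ht⟩ := ih h'
          refine ⟨x :: t, r, by simp, ?_⟩
          simp only [List.mem_cons, not_or]
          exact ⟨fun hh => hx hh.symm, ht⟩

lemma filter_eq_self_of_not_mem {v₀ : V} {l : List V} (h : v₀ ∉ l) :
    l.filter (fun x => x ≠ v₀) = l :=
  List.filter_eq_self.mpr (fun x hx => by
    simp only [ne_eq, decide_not, Bool.not_eq_true', decide_eq_false_iff_not]
    rintro rfl; exact h hx)

lemma split_lemma (c : V → V → ℝ) (s : Finset V) (v₀ : V)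
    (hcyc : ∀ (a : V) (l : List V), a ∈ s → (∀ x ∈ l, x ∈ s) → (a :: l).Nodup →
      pathW c a (l ++ [a]) < 0)
    (hv₀ : v₀ ∈ s) :
    ∀ (n : ℕ) (u : List V) (a : V), u.length ≤ n → a ∈ s → a ≠ v₀ →
      (∀ x ∈ u, x ∈ s) → ((a :: u).filter (fun x => x ≠ v₀)).Nodup →
      pathW c a (u ++ [a]) < 0 := by
  intro n
  induction n with
  | zero =>
      intro u a hlen ha hav₀ hus hnd
      have : u = [] := List.length_eq_zero_iff.mp (Nat.le_zero.mp hlen)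
      subst this
      exact hcyc a [] ha (by simp) (by simp)
  | succ n ih =>
      intro u a hlen ha hav₀ hus hnd
      by_cases hv : v₀ ∈ u
      · obtain ⟨t, r, rfl, htv⟩ := first_split hv
        have hts : ∀ x ∈ t, x ∈ s := fun x hx => hus x (by simp [hx])
        by_cases hv' : v₀ ∈ r
        · obtain ⟨r₁, r₂, rfl, hr₁v⟩ := first_split hv'
          have hfilt : ((a :: (t ++ v₀ :: (r₁ ++ v₀ :: r₂))).filter (fun x => x ≠ v₀))
              = a :: ((t.filter (fun x => x ≠ v₀)) ++ ((r₁.filter (fun x => x ≠ v₀))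
                  ++ (r₂.filter (fun x => x ≠ v₀)))) := by
            simp [List.filter_cons, List.filter_append, hav₀]
          rw [hfilt] at hnd
          have hr₁nd : r₁.Nodup := by
            have h1 := hnd.of_cons
            have h2 := (List.Nodup.of_append_right h1)
            have h3 := (List.Nodup.of_append_left h2)
            rwa [filter_eq_self_of_not_mem hr₁v] at h3
          have hmid : pathW c v₀ (r₁ ++ [v₀]) < 0 := by
            apply hcyc v₀ r₁ hv₀
            · intro x hx
              apply hus x
              simp [hx]
            · exact List.nodup_cons.mpr ⟨hr₁v, hr₁nd⟩
          have hrec : pathW c a ((t ++ v₀ :: r₂) ++ [a]) < 0 := by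
            apply ih (t ++ v₀ :: r₂) a
            · have h1 : (t ++ v₀ :: (r₁ ++ v₀ :: r₂)).length ≤ n + 1 := hlen
              simp only [List.length_append, List.length_cons] at h1 ⊢
              omega
            · exact ha
            · exact hav₀
            · intro x hx
              apply hus x
              simp only [List.mem_append, List.mem_cons] at hx ⊢
              tauto
            · have hfilt2 : ((a :: (t ++ v₀ :: r₂)).filter (fun x => x ≠ v₀))
                  = a :: ((t.filter (fun x => x ≠ v₀)) ++ (r₂.filter (fun x => x ≠ v₀))) := by
                simp [List.filter_cons, List.filter_append, hav₀]
              rw [hfilt2]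
              apply List.Nodup.sublist _ hnd
              apply List.Sublist.cons₂
              exact List.Sublist.append_left (List.sublist_append_right _ _) _
          have e2 : pathW c a ((t ++ v₀ :: (r₁ ++ v₀ :: r₂)) ++ [a])
              = pathW c a (t ++ [v₀]) + (pathW c v₀ (r₁ ++ [v₀]) + pathW c v₀ (r₂ ++ [a])) := by
            have e1 : (t ++ v₀ :: (r₁ ++ v₀ :: r₂)) ++ [a]
                = t ++ v₀ :: (r₁ ++ v₀ :: (r₂ ++ [a])) := by simp
            rw [e1, pathW_append c t a v₀ (r₁ ++ v₀ :: (r₂ ++ [a])),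
              pathW_append c r₁ v₀ v₀ (r₂ ++ [a])]
          have e3 : pathW c a ((t ++ v₀ :: r₂) ++ [a])
              = pathW c a (t ++ [v₀]) + pathW c v₀ (r₂ ++ [a]) := by
            have e1 : (t ++ v₀ :: r₂) ++ [a] = t ++ v₀ :: (r₂ ++ [a]) := by simp
            rw [e1, pathW_append c t a v₀ (r₂ ++ [a])]
          rw [e2]
          rw [e3] at hrec
          linarith
        · have hfilt : ((a :: (t ++ v₀ :: r)).filter (fun x => x ≠ v₀))
              = a :: (t ++ r) := by
            simp only [List.filter_cons, List.filter_append]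
            rw [filter_eq_self_of_not_mem htv, filter_eq_self_of_not_mem hv']
            simp [hav₀]
          rw [hfilt] at hnd
          have hvnotmem : v₀ ∉ a :: (t ++ r) := by
            simp only [List.mem_cons, List.mem_append, not_or]
            refine ⟨fun hh => hav₀ hh.symm, htv, hv'⟩
          have hnd2 : (v₀ :: (a :: (t ++ r))).Nodup := List.nodup_cons.mpr ⟨hvnotmem, hnd⟩
          have hnd3 : (a :: (t ++ v₀ :: r)).Nodup := by
            have he : a :: (t ++ v₀ :: r) = (a :: t) ++ v₀ :: r := by simp
            rw [he, List.nodup_middle]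
            simpa using hnd2
          exact hcyc a (t ++ v₀ :: r) ha hus hnd3
      · have hfilt : ((a :: u).filter (fun x => x ≠ v₀)) = a :: u := by
          apply filter_eq_self_of_not_mem
          simp only [List.mem_cons, not_or]
          exact ⟨fun hh => hav₀ hh.symm, hv⟩
        rw [hfilt] at hnd
        exact hcyc a u ha hus hnd

lemma potential {V : Type*} [DecidableEq V] (s : Finset V) :
    ∀ (c : V → V → ℝ), s.Nonempty →
    (∀ (a : V) (l : List V), a ∈ s → (∀ x ∈ l, x ∈ s) → (a :: l).Nodup →
      pathW c a (l ++ [a]) < 0) →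
    ∃ d : V → ℝ, ∀ a ∈ s, ∀ b ∈ s, d a + c a b < d b := by
  induction s using Finset.strongInduction with
  | _ s ihs =>
    intro c hne hcyc
    obtain ⟨v₀, hv₀⟩ := hne
    have hloop : ∀ x ∈ s, c x x < 0 := by
      intro x hx
      have := hcyc x [] hx (by simp) (by simp)
      simpa [pathW] using this
    rcases Finset.eq_empty_or_nonempty (s.erase v₀) with herase | hne'
    · have hsing : ∀ a ∈ s, a = v₀ := by
        intro a ha
        by_contra hav
        have : a ∈ s.erase v₀ := Finset.mem_erase.mpr ⟨hav, ha⟩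
        rw [herase] at this; simp at this
      refine ⟨fun _ => 0, ?_⟩
      intro a ha b hb
      rw [hsing a ha, hsing b hb]
      simpa using hloop v₀ hv₀
    · have hsub : s.erase v₀ ⊂ s := Finset.erase_ssubset hv₀
      have hs'mem : ∀ x ∈ s.erase v₀, x ∈ s := fun x hx => Finset.mem_of_mem_erase hx
      have hcyc' : ∀ (a : V) (l : List V), a ∈ s.erase v₀ → (∀ x ∈ l, x ∈ s.erase v₀) →
          (a :: l).Nodup →
          pathW (fun x y => max (c x y) (c x v₀ + c v₀ y)) a (l ++ [a]) < 0 := by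
        intro a l ha hl hnd
        obtain ⟨l', hval, hins⟩ := expand c v₀ (l ++ [a]) a
        rw [hval]
        have hanv : a ≠ v₀ := (Finset.mem_erase.mp ha).1
        have hlnv : ∀ x ∈ l, x ≠ v₀ := fun x hx => (Finset.mem_erase.mp (hl x hx)).1
        obtain ⟨u, rfl⟩ := Ins_last hins l a rfl
        have hfl : (l ++ [a]).filter (fun x => x ≠ v₀) = l ++ [a] := by
          apply filter_eq_self_of_not_mem
          simp only [List.mem_append, List.mem_singleton]
          rintro (hm | rfl)
          · exact hlnv v₀ hm rfl
          · exact hanv rfl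
        have hfa : [a].filter (fun x => x ≠ v₀) = [a] := by
          apply filter_eq_self_of_not_mem
          simp only [List.mem_singleton]
          exact fun hm => hanv hm.symm
        have hfu : (u ++ [a]).filter (fun x => x ≠ v₀)
            = u.filter (fun x => x ≠ v₀) ++ [a] := by
          rw [List.filter_append, hfa]
        have hful : u.filter (fun x => x ≠ v₀) = l := by
          have h1 := Ins_filter hins
          rw [hfu, hfl] at h1
          exact List.append_cancel_right h1
        apply split_lemma c s v₀ hcyc hv₀ u.length u a le_rfl (hs'mem a ha) hanv
        · intro x hx
          rcases Ins_mem hins x (by simp [hx]) with hm | rfl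
          · rcases List.mem_append.mp hm with hm' | hm'
            · exact hs'mem x (hl x hm')
            · simp at hm'; subst hm'; exact hs'mem _ ha
          · exact hv₀
        · have hfau : ((a :: u).filter (fun x => x ≠ v₀)) = a :: l := by
            have h0 : a :: u = [a] ++ u := rfl
            rw [h0, List.filter_append, hfa, hful]
            rfl
          rw [hfau]
          exact hnd
      obtain ⟨d', hd'⟩ := ihs (s.erase v₀) hsub
        (fun x y => max (c x y) (c x v₀ + c v₀ y)) hne' hcyc'
      obtain ⟨a₀, ha₀, hmax⟩ := Finset.exists_max_image (s.erase v₀)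
        (fun a => d' a + c a v₀) hne'
      obtain ⟨b₀, hb₀, hmin⟩ := Finset.exists_min_image (s.erase v₀)
        (fun b => d' b - (d' a₀ + c a₀ v₀) - c v₀ b) hne'
      set A := d' a₀ + c a₀ v₀ with hA
      set θ := d' b₀ - A - c v₀ b₀ with hθ
      have hθpos : 0 < θ := by
        have h1 := hd' a₀ ha₀ b₀ hb₀
        have h2 : c a₀ v₀ + c v₀ b₀ ≤ max (c a₀ b₀) (c a₀ v₀ + c v₀ b₀) := le_max_right _ _
        rw [hθ, hA]
        linarith
      refine ⟨fun x => if x = v₀ then A + θ/2 else d' x, ?_⟩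
      intro a ha b hb
      dsimp only
      by_cases hav : a = v₀ <;> by_cases hbv : b = v₀
      · rw [if_pos hav, if_pos hbv, hav, hbv]
        have := hloop v₀ hv₀
        linarith
      · rw [if_pos hav, if_neg hbv, hav]
        have hb' : b ∈ s.erase v₀ := Finset.mem_erase.mpr ⟨hbv, hb⟩
        have := hmin b hb'
        linarith
      · rw [if_neg hav, if_pos hbv, hbv]
        have ha' : a ∈ s.erase v₀ := Finset.mem_erase.mpr ⟨hav, ha⟩
        have := hmax a ha'
        linarith
      · rw [if_neg hav, if_neg hbv]
        have ha' : a ∈ s.erase v₀ := Finset.mem_erase.mpr ⟨hav, ha⟩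
        have hb' : b ∈ s.erase v₀ := Finset.mem_erase.mpr ⟨hbv, hb⟩
        have h1 := hd' a ha' b hb'
        have h2 : c a b ≤ max (c a b) (c a v₀ + c v₀ b) := le_max_left _ _
        linarith

end PATH

section MKT
variable {X I : Type*} [Fintype X] [DecidableEq X] [Fintype I] [DecidableEq I]

def fam (ω : X → I) : I → Finset X := fun i => univ.filter (fun x => ω x = i)

lemma mem_fam {ω : X → I} {x : X} {i : I} : x ∈ fam ω i ↔ ω x = i := by
  simp [fam]

lemma fam_inj {ω ω' : X → I} (h : fam ω = fam ω') : ω = ω' := by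
  funext x
  have : x ∈ fam ω' (ω x) := by rw [← h]; exact mem_fam.mpr rfl
  exact (mem_fam.mp this).symm

def swSum (v : I → X → ℝ) (ω : X → I) : ℝ := ∑ x, v (ω x) x

lemma swSum_update (v : I → X → ℝ) (ω : X → I) (y : X) (i : I) :
    swSum v (Function.update ω y i) = swSum v ω - v (ω y) y + v i y := by
  unfold swSum
  rw [Finset.sum_eq_sum_sdiff_singleton_add (Finset.mem_univ y)
      (fun x => v (Function.update ω y i x) x),
    Finset.sum_eq_sum_sdiff_singleton_add (Finset.mem_univ y) (fun x => v (ω x) x)]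
  have h1 : ∀ x ∈ univ \ {y}, v (Function.update ω y i x) x = v (ω x) x := by
    intro x hx
    have hxy : x ≠ y := by simpa using (Finset.mem_sdiff.mp hx).2
    rw [Function.update_of_ne hxy]
  rw [Finset.sum_congr rfl h1, Function.update_self]
  ring

lemma card_fam_update (ω : X → I) (y : X) (i : I) (j : I) :
    ((fam (Function.update ω y i) j).card : ℤ) =
      ((fam ω j).card : ℤ) + (if j = i then 1 else 0) - (if j = ω y then 1 else 0) := by
  have key : fam (Function.update ω y i) j =
      if j = i then insert y ((fam ω j).erase y) else (fam ω j).erase y := by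
    ext x
    rcases eq_or_ne x y with rfl | hxy
    · simp only [mem_fam, Function.update_self]
      by_cases hji : j = i
      · simp [hji]
      · simp [hji, Ne.symm hji, Finset.mem_erase]
    · simp only [mem_fam, Function.update_of_ne hxy]
      by_cases hji : j = i
      · simp [hji, Finset.mem_insert, hxy, Finset.mem_erase, mem_fam]
      · simp [hji, Finset.mem_erase, hxy, mem_fam]
  rw [key]
  by_cases hjy : j = ω y
  · have hymem : y ∈ fam ω j := mem_fam.mpr hjy.symm
    have hcpos : 1 ≤ (fam ω j).card := Finset.card_pos.mpr ⟨y, hymem⟩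
    by_cases hji : j = i
    · rw [if_pos hji, if_pos hji, if_pos hjy]
      rw [Finset.card_insert_of_notMem (Finset.notMem_erase y _),
        Finset.card_erase_of_mem hymem]
      push_cast [hcpos]
      ring
    · rw [if_neg hji, if_neg hji, if_pos hjy]
      rw [Finset.card_erase_of_mem hymem]
      push_cast [hcpos]
      ring
  · have hynmem : y ∉ fam ω j := fun hm => hjy (mem_fam.mp hm).symm
    have herase : (fam ω j).erase y = fam ω j := Finset.erase_eq_of_notMem hynmem
    by_cases hji : j = i
    · rw [if_pos hji, if_pos hji, if_neg hjy, herase,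
        Finset.card_insert_of_notMem hynmem]
      push_cast
      ring
    · rw [if_neg hji, if_neg hji, if_neg hjy, herase]
      push_cast
      ring

end MKT

section GP
variable {X I : Type*} [Fintype X] [DecidableEq X] [Fintype I] [DecidableEq I]
variable (k : I → ℕ) (v : I → X → ℝ) (ω₁ ω₂ : X → I) (c : I → I → ℝ) (B vmax : ℝ)

lemma pathW_le (hcle : ∀ a b, c a b ≤ vmax) (hvmax0 : 0 ≤ vmax) :
    ∀ (l : List I) (a : I), pathW c a l ≤ (l.length : ℝ) * vmax
  | [], a => by simp
  | b :: l, a => by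
      have h1 := pathW_le hcle hvmax0 l b
      have h2 := hcle a b
      simp only [pathW_cons, List.length_cons]
      push_cast
      nlinarith

lemma GP
    (hv : ∀ i x, 0 < v i x)
    (hopt : ∀ ω : X → I, (∀ j, (fam ω j).card = k j) → swSum v ω ≤ swSum v ω₁)
    (hvmax : ∀ i x, v i x ≤ vmax) (hvmax0 : 0 ≤ vmax)
    (hB : (Fintype.card X : ℝ) * vmax + (Fintype.card I : ℝ) * vmax < B)
    (hcle : ∀ j i, c j i ≤ vmax)
    (hcases : ∀ j i, c j i = -B ∨ ∃ y, ω₁ y = j ∧ i ≠ j ∧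
        ((¬(ω₁ y ≠ ω₂ y ∧ ω₂ y = i) ∧ c j i = v i y - v j y) ∨
         ((ω₁ y ≠ ω₂ y ∧ ω₂ y = i) ∧ c j i = -(v j y))))
    (first : I) :
    ∀ (l : List I) (cur : I) (ω' : X → I),
      (cur :: l).Nodup →
      (∀ j, ((fam ω' j).card : ℤ) =
        (k j : ℤ) + (if j = cur then 1 else 0) - (if j = first then 1 else 0)) →
      (∀ x, ω₁ x ∈ (cur :: l) → ω' x = ω₁ x) →
      (swSum v ω' + pathW c cur (l ++ [first]) < swSum v ω₁) ∨
      (∃ ω₃ : X → I, (∀ j, (fam ω₃ j).card = k j) ∧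
        swSum v ω' + pathW c cur (l ++ [first]) ≤ swSum v ω₃ ∧
        (swSum v ω' + pathW c cur (l ++ [first]) = swSum v ω₃ →
          ∃ y, ω₃ y ≠ ω₁ y ∧ ω₃ y ≠ ω₂ y)) := by
  have hsw'le : ∀ ω' : X → I, swSum v ω' ≤ (Fintype.card X : ℝ) * vmax := by
    intro ω'
    unfold swSum
    calc ∑ x, v (ω' x) x ≤ ∑ _x : X, vmax := Finset.sum_le_sum (fun x _ => hvmax _ x)
    _ = (Fintype.card X : ℝ) * vmax := by
      rw [Finset.sum_const, nsmul_eq_mul, Finset.card_univ]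
  have hsw1pos : 0 ≤ swSum v ω₁ :=
    Finset.sum_nonneg (fun x _ => (hv _ x).le)
  intro l
  induction l with
  | nil =>
      intro cur ω' hnd h1 h3
      simp only [List.nil_append, pathW_cons, pathW_nil]
      rcases hcases cur first with hfake | ⟨y, hy1, hfc, hkind⟩
      · left
        rw [hfake]
        have := hsw'le ω'
        have hCI : (0:ℝ) ≤ (Fintype.card I : ℝ) * vmax := by positivity
        linarith
      · have hω'y : ω' y = cur := by
          rw [h3 y (by rw [hy1]; exact List.mem_cons_self), hy1]
        have hbal3 : ∀ j, (fam (Function.update ω' y first) j).card = k j := by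
          intro j
          have hc := card_fam_update ω' y first j
          rw [hω'y] at hc
          have h1j := h1 j
          have : ((fam (Function.update ω' y first) j).card : ℤ) = k j := by
            rw [hc, h1j]
            by_cases hj1 : j = first <;> by_cases hj2 : j = cur <;>
              simp [hj1, hj2] <;> ring
          exact_mod_cast this
        have hsw3 : swSum v (Function.update ω' y first)
            = swSum v ω' + (v first y - v cur y) := by
          rw [swSum_update, hω'y]; ring
        rcases hkind with ⟨hnd2, hcv⟩ | ⟨⟨hyM, hy2⟩, hcv⟩
        · right
          refine ⟨Function.update ω' y first, hbal3, ?_, ?_⟩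
          · rw [hcv, hsw3]; ring_nf; rfl
          · intro _
            refine ⟨y, ?_, ?_⟩
            · rw [Function.update_self, hy1]; exact hfc
            · rw [Function.update_self]
              intro h2f
              exact hnd2 ⟨by rw [hy1, ← h2f]; exact Ne.symm hfc, h2f.symm⟩
        · left
          have hle := hopt _ hbal3
          have := hv first y
          rw [hcv]
          linarith [hsw3]
  | cons b l' ih =>
      intro cur ω' hnd h1 h3
      have hndb : (b :: l').Nodup := hnd.of_cons
      have hcurb : cur ≠ b := by
        have := List.nodup_cons.mp hnd
        intro h; exact this.1 (h ▸ List.mem_cons_self)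
      simp only [List.cons_append, pathW_cons]
      rcases hcases cur b with hfake | ⟨y, hy1, hfc, hkind⟩
      · left
        rw [hfake]
        have hrest := pathW_le c vmax hcle hvmax0 (l' ++ [first]) b
        have hlen : (l' ++ [first]).length ≤ Fintype.card I := by
          have := hnd.length_le_card
          simp only [List.length_cons] at this
          simp only [List.length_append, List.length_singleton]
          omega
        have hrest2 : pathW c b (l' ++ [first]) ≤ (Fintype.card I : ℝ) * vmax := by
          calc pathW c b (l' ++ [first]) ≤ ((l' ++ [first]).length : ℝ) * vmax := hrest
          _ ≤ (Fintype.card I : ℝ) * vmax := by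
            apply mul_le_mul_of_nonneg_right _ hvmax0
            exact_mod_cast hlen
        have := hsw'le ω'
        linarith
      · have hω'y : ω' y = cur := by
          rw [h3 y (by rw [hy1]; exact List.mem_cons_self), hy1]
        set ω'' := Function.update ω' y b with hω''
        have h1' : ∀ j, ((fam ω'' j).card : ℤ) =
            (k j : ℤ) + (if j = b then 1 else 0) - (if j = first then 1 else 0) := by
          intro j
          have hc := card_fam_update ω' y b j
          rw [hω'y] at hc
          rw [hω'', hc, h1 j]
          by_cases hj1 : j = first <;> by_cases hj2 : j = cur <;> by_cases hj3 : j = b <;>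
            simp [hj1, hj2, hj3] <;> ring_nf <;>
            first
              | rfl
              | (exfalso; exact hcurb (hj2 ▸ hj3 ▸ rfl))
        have h3' : ∀ x, ω₁ x ∈ (b :: l') → ω'' x = ω₁ x := by
          intro x hx
          have hxy : x ≠ y := by
            intro h
            subst h
            rw [hy1] at hx
            exact (List.nodup_cons.mp hnd).1 hx
          rw [hω'', Function.update_of_ne hxy]
          exact h3 x (List.mem_cons_of_mem _ hx)
        have hsw'' : swSum v ω'' = swSum v ω' + (v b y - v cur y) := by
          rw [hω'', swSum_update, hω'y]; ring
        rcases hkind with ⟨hnd2, hcv⟩ | ⟨⟨hyM, hy2⟩, hcv⟩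
        · -- normal arc
          rcases ih b ω'' hndb h1' h3' with hB' | ⟨ω₃, hbal₃, hle₃, heq₃⟩
          · left
            rw [hcv]
            linarith [hsw'']
          · right
            refine ⟨ω₃, hbal₃, ?_, ?_⟩
            · rw [hcv]; linarith [hsw'']
            · intro heq
              apply heq₃
              rw [hcv] at heq
              linarith [hsw'']
        · -- special arc
          rcases ih b ω'' hndb h1' h3' with hB' | ⟨ω₃, hbal₃, hle₃, heq₃⟩
          · left
            rw [hcv]
            have := hv b y
            linarith [hsw'']
          · left
            have hle := hopt _ hbal₃
            have := hv b y
            rw [hcv]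
            linarith [hsw'']

lemma negcyc
    (hv : ∀ i x, 0 < v i x)
    (hbal1 : ∀ j, (fam ω₁ j).card = k j)
    (hopt : ∀ ω : X → I, (∀ j, (fam ω j).card = k j) → swSum v ω ≤ swSum v ω₁)
    (honly : ∀ ω₃ : X → I, (∀ j, (fam ω₃ j).card = k j) → swSum v ω₃ = swSum v ω₁ →
      ω₃ = ω₁ ∨ ω₃ = ω₂)
    (hvmax : ∀ i x, v i x ≤ vmax) (hvmax0 : 0 ≤ vmax)
    (hB : (Fintype.card X : ℝ) * vmax + (Fintype.card I : ℝ) * vmax < B)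
    (hcle : ∀ j i, c j i ≤ vmax)
    (hcases : ∀ j i, c j i = -B ∨ ∃ y, ω₁ y = j ∧ i ≠ j ∧
        ((¬(ω₁ y ≠ ω₂ y ∧ ω₂ y = i) ∧ c j i = v i y - v j y) ∨
         ((ω₁ y ≠ ω₂ y ∧ ω₂ y = i) ∧ c j i = -(v j y)))) :
    ∀ (a : I) (l : List I), (a :: l).Nodup → pathW c a (l ++ [a]) < 0 := by
  intro a l hnd
  rcases GP k v ω₁ ω₂ c B vmax hv hopt hvmax hvmax0 hB hcle hcases a l a ω₁ hnd
      (fun j => by simp [hbal1 j]) (fun x _ => rfl) with hB' | ⟨ω₃, hbal₃, hle₃, heq₃⟩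
  · linarith
  · have hle := hopt _ hbal₃
    have hple : pathW c a (l ++ [a]) ≤ 0 := by linarith
    rcases lt_or_eq_of_le hple with h | h
    · exact h
    · exfalso
      have heq : swSum v ω₁ + pathW c a (l ++ [a]) = swSum v ω₃ := by
        have : swSum v ω₃ ≤ swSum v ω₁ + pathW c a (l ++ [a]) := by rw [h]; linarith
        linarith
      obtain ⟨y, hy1, hy2⟩ := heq₃ heq
      have hsw3 : swSum v ω₃ = swSum v ω₁ := by rw [← heq, h]; ring
      rcases honly ω₃ hbal₃ hsw3 with rfl | rfl
      · exact hy1 rfl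
      · exact hy2 rfl
end GP

section INJ
variable {X I : Type*} [Fintype X] [DecidableEq X] [Fintype I] [DecidableEq I]
variable (k : I → ℕ) (v : I → X → ℝ)

lemma owner_inj
    (ω₁ ω₂ : X → I)
    (hbal1 : ∀ j, (fam ω₁ j).card = k j) (hbal2 : ∀ j, (fam ω₂ j).card = k j)
    (hopt : ∀ ω : X → I, (∀ j, (fam ω j).card = k j) → swSum v ω ≤ swSum v ω₁)
    (hsw2 : swSum v ω₂ = swSum v ω₁)
    (honly : ∀ ω₃ : X → I, (∀ j, (fam ω₃ j).card = k j) → swSum v ω₃ = swSum v ω₁ →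
      ω₃ = ω₁ ∨ ω₃ = ω₂) :
    ∀ x y : X, ω₁ x ≠ ω₂ x → ω₁ y ≠ ω₂ y → ω₁ x = ω₁ y → x = y := by
  classical
  set M : Finset X := univ.filter (fun x => ω₁ x ≠ ω₂ x) with hM
  have memM : ∀ x, x ∈ M ↔ ω₁ x ≠ ω₂ x := by intro x; simp [hM]
  -- mixture argument
  have hmix : ∀ A : Finset X, A ⊆ M →
      (∀ j, ((fam ω₁ j) ∩ A).card = ((fam ω₂ j) ∩ A).card) →
      A.Nonempty → A ≠ M → False := by
    intro A hAM hbalA hAne hAneM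
    set ω₃ : X → I := fun x => if x ∈ A then ω₂ x else ω₁ x with hω₃
    set ω₄ : X → I := fun x => if x ∈ A then ω₁ x else ω₂ x with hω₄
    have hfam3 : ∀ j, fam ω₃ j = ((fam ω₁ j) \ A) ∪ ((fam ω₂ j) ∩ A) := by
      intro j
      ext x
      simp only [mem_fam, hω₃, Finset.mem_union, Finset.mem_sdiff, Finset.mem_inter]
      by_cases hx : x ∈ A <;> simp [hx, mem_fam]
    have hfam4 : ∀ j, fam ω₄ j = ((fam ω₂ j) \ A) ∪ ((fam ω₁ j) ∩ A) := by
      intro j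
      ext x
      simp only [mem_fam, hω₄, Finset.mem_union, Finset.mem_sdiff, Finset.mem_inter]
      by_cases hx : x ∈ A <;> simp [hx, mem_fam]
    have hdisj3 : ∀ j, Disjoint ((fam ω₁ j) \ A) ((fam ω₂ j) ∩ A) := by
      intro j
      apply Finset.disjoint_left.mpr
      intro x hx1 hx2
      exact (Finset.mem_sdiff.mp hx1).2 (Finset.mem_inter.mp hx2).2
    have hdisj4 : ∀ j, Disjoint ((fam ω₂ j) \ A) ((fam ω₁ j) ∩ A) := by
      intro j
      apply Finset.disjoint_left.mpr
      intro x hx1 hx2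
      exact (Finset.mem_sdiff.mp hx1).2 (Finset.mem_inter.mp hx2).2
    have hbal3 : ∀ j, (fam ω₃ j).card = k j := by
      intro j
      rw [hfam3 j, Finset.card_union_of_disjoint (hdisj3 j)]
      have h1 := Finset.card_sdiff_add_card_inter (fam ω₁ j) A
      have h2 := hbalA j
      have h3 := hbal1 j
      omega
    have hbal4 : ∀ j, (fam ω₄ j).card = k j := by
      intro j
      rw [hfam4 j, Finset.card_union_of_disjoint (hdisj4 j)]
      have h1 := Finset.card_sdiff_add_card_inter (fam ω₂ j) A
      have h2 := hbalA j
      have h3 := hbal2 j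
      omega
    have hsum : swSum v ω₃ + swSum v ω₄ = swSum v ω₁ + swSum v ω₂ := by
      unfold swSum
      rw [← Finset.sum_add_distrib, ← Finset.sum_add_distrib]
      apply Finset.sum_congr rfl
      intro x _
      simp only [hω₃, hω₄]
      by_cases hx : x ∈ A <;> simp [hx] <;> ring
    have h3le := hopt ω₃ hbal3
    have h4le := hopt ω₄ hbal4
    have hsw3 : swSum v ω₃ = swSum v ω₁ := by linarith
    rcases honly ω₃ hbal3 hsw3 with h | h
    · obtain ⟨x₀, hx₀⟩ := hAne
      have hval : ω₃ x₀ = ω₂ x₀ := by simp [hω₃, hx₀]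
      rw [h] at hval
      exact (memM x₀).mp (hAM hx₀) hval
    · obtain ⟨y₀, hy₀M, hy₀A⟩ : ∃ y₀, y₀ ∈ M ∧ y₀ ∉ A := by
        by_contra hc
        push_neg at hc
        exact hAneM (Finset.Subset.antisymm hAM (fun z hz => hc z hz))
      have hval : ω₃ y₀ = ω₁ y₀ := by simp [hω₃, hy₀A]
      rw [h] at hval
      exact (memM y₀).mp hy₀M hval.symm
  -- orbit argument
  have horb : ∀ G : Equiv.Perm {z : X // z ∈ M}, (∀ z, ω₁ (G z).1 = ω₂ z.1) →
      (∃ z w, ¬G.SameCycle z w) → False := by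
    rintro G hG ⟨z, w, hzw⟩
    set A₀ : Finset {z : X // z ∈ M} := univ.filter (fun u => G.SameCycle z u) with hA₀
    set A : Finset X := A₀.image (fun u => u.1) with hA
    have memA : ∀ (u : {z : X // z ∈ M}), u.1 ∈ A ↔ u ∈ A₀ := by
      intro u
      constructor
      · intro hu
        obtain ⟨u', hu', hval⟩ := Finset.mem_image.mp hu
        rwa [Subtype.ext hval] at hu'
      · intro hu; exact Finset.mem_image_of_mem _ hu
    have memA₀ : ∀ (u : {z : X // z ∈ M}), u ∈ A₀ ↔ G.SameCycle z u := by
      intro u; simp [hA₀]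
    have hAM : A ⊆ M := by
      intro a ha
      obtain ⟨u, _, hval⟩ := Finset.mem_image.mp ha
      rw [← hval]; exact u.2
    have hAne : A.Nonempty := ⟨z.1, (memA z).mpr ((memA₀ z).mpr (Equiv.Perm.SameCycle.refl _ _))⟩
    have hAneM : A ≠ M := by
      intro h
      have : w.1 ∈ A := by rw [h]; exact w.2
      exact hzw ((memA₀ w).mp ((memA w).mp this))
    apply hmix A hAM _ hAne hAneM
    intro j
    -- subtype-level sets
    have key : ∀ (ω : X → I), (fam ω j) ∩ A = (A₀.filter (fun u => ω u.1 = j)).image (fun u => u.1) := by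
      intro ω
      ext a
      simp only [Finset.mem_inter, mem_fam, Finset.mem_image, Finset.mem_filter]
      constructor
      · rintro ⟨hfam, hmem⟩
        obtain ⟨u, hu, hval⟩ := Finset.mem_image.mp hmem
        exact ⟨u, ⟨hu, by rw [hval]; exact hfam⟩, hval⟩
      · rintro ⟨u, ⟨hu, hωu⟩, hval⟩
        exact ⟨by rw [← hval]; exact hωu, by rw [← hval]; exact (memA u).mpr hu⟩
    rw [key ω₁, key ω₂, Finset.card_image_of_injective _ (fun a b hab => Subtype.ext hab),
      Finset.card_image_of_injective _ (fun a b hab => Subtype.ext hab)]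
    -- bijection G between the filtered subtype sets
    symm
    apply Finset.card_nbij' (fun u => G u) (fun u => G⁻¹ u)
    · intro u hu
      rw [Finset.mem_coe, Finset.mem_filter] at hu ⊢
      obtain ⟨hu₀, hωu⟩ := hu
      refine ⟨(memA₀ _).mpr (((memA₀ u).mp hu₀).apply_right), ?_⟩
      rw [hG u]; exact hωu
    · intro u hu
      rw [Finset.mem_coe, Finset.mem_filter] at hu ⊢
      obtain ⟨hu₀, hωu⟩ := hu
      refine ⟨(memA₀ _).mpr ?_, ?_⟩
      · exact (Equiv.Perm.sameCycle_symm_apply_right).mpr ((memA₀ u).mp hu₀)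
      · have := hG (G⁻¹ u)
        rw [Equiv.Perm.coe_inv, Equiv.apply_symm_apply, ← Equiv.Perm.coe_inv] at this
        rw [← this]; exact hωu
    · intro u _; simp
    · intro u _; simp
  -- main argument
  intro x y hx hy hxy
  by_contra hne
  have xm : x ∈ M := (memM x).mpr hx
  have ym : y ∈ M := (memM y).mpr hy
  -- construct base permutation via sigma fiber decompositions
  have cardeq : ∀ i : I, Fintype.card {u : {z : X // z ∈ M} // ω₂ u.1 = i}
      = Fintype.card {u : {z : X // z ∈ M} // ω₁ u.1 = i} := by
    intro i
    rw [Fintype.card_subtype, Fintype.card_subtype]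
    have hsub : ∀ (ω : X → I), (univ.filter (fun u : {z : X // z ∈ M} => ω u.1 = i)).card
        = ((fam ω i) ∩ M).card := by
      intro ω
      apply Finset.card_nbij (fun u => u.1)
      · intro u hu
        rw [Finset.mem_coe, Finset.mem_filter] at hu
        exact Finset.mem_inter.mpr ⟨mem_fam.mpr hu.2, u.2⟩
      · intro a _ b _ hab; exact Subtype.ext hab
      · intro a ha
        rw [Finset.coe_inter] at ha
        obtain ⟨ha1, ha2⟩ := ha
        refine ⟨⟨a, ha2⟩, ?_, rfl⟩
        simp only [Finset.coe_filter, Set.mem_setOf_eq, Finset.mem_univ, true_and]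
        exact mem_fam.mp ha1
    rw [hsub, hsub]
    have hdM : fam ω₁ i \ M = fam ω₂ i \ M := by
      ext a
      simp only [Finset.mem_sdiff, mem_fam, memM, not_not]
      constructor
      · rintro ⟨h1, h2⟩; exact ⟨by rw [← h2]; exact h1, h2⟩
      · rintro ⟨h1, h2⟩; exact ⟨by rw [h2]; exact h1, h2⟩
    have e1 := Finset.card_sdiff_add_card_inter (fam ω₁ i) M
    have e2 := Finset.card_sdiff_add_card_inter (fam ω₂ i) M
    rw [hdM] at e1
    have := hbal1 i
    have := hbal2 i
    omega
  set βe : ∀ i : I, {u : {z : X // z ∈ M} // ω₂ u.1 = i} ≃ {u : {z : X // z ∈ M} // ω₁ u.1 = i} :=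
    fun i => Fintype.equivOfCardEq (cardeq i) with hβe
  set G : Equiv.Perm {z : X // z ∈ M} :=
    ((Equiv.sigmaFiberEquiv (fun u : {z : X // z ∈ M} => ω₂ u.1)).symm.trans
      ((Equiv.sigmaCongrRight βe).trans
        (Equiv.sigmaFiberEquiv (fun u : {z : X // z ∈ M} => ω₁ u.1)))) with hGdef
  have hGapp : ∀ u, G u = ((βe (ω₂ u.1)) ⟨u, rfl⟩).1 := fun u => rfl
  have hGprop : ∀ u, ω₁ (G u).1 = ω₂ u.1 := by
    intro u
    rw [hGapp u]
    exact ((βe (ω₂ u.1)) ⟨u, rfl⟩).2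
  -- swap-modified permutation
  set zx : {z : X // z ∈ M} := ⟨x, xm⟩ with hzx
  set zy : {z : X // z ∈ M} := ⟨y, ym⟩ with hzy
  have hzxy : zx ≠ zy := fun h => hne (congrArg Subtype.val h)
  have hswap_pres : ∀ u : {z : X // z ∈ M}, ω₁ ((Equiv.swap zx zy) u).1 = ω₁ u.1 := by
    intro u
    rcases eq_or_ne u zx with rfl | h1
    · rw [Equiv.swap_apply_left]; exact hxy.symm
    · rcases eq_or_ne u zy with rfl | h2
      · rw [Equiv.swap_apply_right]; exact hxy
      · rw [Equiv.swap_apply_of_ne_of_ne h1 h2]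
  set G' : Equiv.Perm {z : X // z ∈ M} := G.trans (Equiv.swap zx zy) with hG'def
  have hG'prop : ∀ u, ω₁ (G' u).1 = ω₂ u.1 := by
    intro u
    have : G' u = (Equiv.swap zx zy) (G u) := rfl
    rw [this, hswap_pres, hGprop]
  -- fixed-point-freeness
  have hGfix : ∀ u, G u ≠ u := by
    intro u h
    have := hGprop u
    rw [h] at this
    exact (memM u.1).mp u.2 this
  have hG'fix : ∀ u, G' u ≠ u := by
    intro u h
    have := hG'prop u
    rw [h] at this
    exact (memM u.1).mp u.2 this
  -- totality of same-cycle for both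
  have hGtot : ∀ z w, G.SameCycle z w := by
    by_contra hc
    push_neg at hc
    obtain ⟨z, w, hzw⟩ := hc
    exact horb G hGprop ⟨z, w, hzw⟩
  have hG'tot : ∀ z w, G'.SameCycle z w := by
    by_contra hc
    push_neg at hc
    obtain ⟨z, w, hzw⟩ := hc
    exact horb G' hG'prop ⟨z, w, hzw⟩
  -- both are cycles with full support
  have hGcyc : G.IsCycle := ⟨zx, hGfix zx, fun w _ => hGtot zx w⟩
  have hG'cyc : G'.IsCycle := ⟨zx, hG'fix zx, fun w _ => hG'tot zx w⟩
  have hGsupp : G.support = univ := by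
    ext u; simp [Equiv.Perm.mem_support, hGfix u]
  have hG'supp : G'.support = univ := by
    ext u; simp [Equiv.Perm.mem_support, hG'fix u]
  have hsignG := hGcyc.sign
  have hsignG' := hG'cyc.sign
  rw [hGsupp] at hsignG
  rw [hG'supp] at hsignG'
  have hmul : G' = (Equiv.swap zx zy) * G := rfl
  have hsign2 : Equiv.Perm.sign G' = - Equiv.Perm.sign G := by
    rw [hmul, Equiv.Perm.sign_mul, Equiv.Perm.sign_swap hzxy, neg_one_mul]
  rw [hsignG, hsignG'] at hsign2
  rcases Int.units_eq_one_or (-(-1 : ℤˣ) ^ (univ : Finset {z : X // z ∈ M}).card) with h | h <;>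
    rw [h] at hsign2 <;> exact absurd hsign2 (by decide)
end INJ

section GLUE
variable {X I : Type*} [Fintype X] [DecidableEq X] [Fintype I] [DecidableEq I]
variable (k : I → ℕ) (v : I → X → ℝ)

lemma exists_owner (O : I → Finset X) (h : IsAllocation k O) :
    ∃ ω : X → I, fam ω = O := by
  choose ω hω using fun x => (h.2 x).exists
  refine ⟨ω, ?_⟩
  funext i
  ext x
  rw [mem_fam]
  constructor
  · rintro rfl; exact hω x
  · intro hx; exact ((h.2 x).unique (hω x) hx)

lemma alloc_fam (ω : X → I) (hbal : ∀ j, (fam ω j).card = k j) :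
    IsAllocation k (fam ω) :=
  ⟨hbal, fun x => ⟨ω x, mem_fam.mpr rfl, fun j hj => (mem_fam.mp hj).symm⟩⟩

lemma sw_fam (hv : ∀ i x, 0 < v i x) (ω : X → I) (hbal : ∀ j, (fam ω j).card = k j) :
    socialWelfare v k (fam ω) = swSum v ω := by
  unfold socialWelfare swSum
  have h1 : ∀ i, bundleValue (k i) (v i) (fam ω i) = ∑ x ∈ fam ω i, v (ω x) x := by
    intro i
    rw [bundleValue_eq_sum (k i) (v i) _ (le_of_eq (hbal i)) (fun x _ => (hv i x).le)]
    apply Finset.sum_congr rfl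
    intro x hx
    rw [mem_fam.mp hx]
  rw [Finset.sum_congr rfl (fun i _ => h1 i)]
  exact Finset.sum_fiberwise_of_maps_to (fun x _ => mem_univ (ω x)) _

lemma card_inter_M (ω₁ ω₂ : X → I)
    (hbal1 : ∀ j, (fam ω₁ j).card = k j) (hbal2 : ∀ j, (fam ω₂ j).card = k j) (i : I) :
    ((fam ω₁ i) ∩ (univ.filter fun x => ω₁ x ≠ ω₂ x)).card
      = ((fam ω₂ i) ∩ (univ.filter fun x => ω₁ x ≠ ω₂ x)).card := by
  set M := univ.filter fun x => ω₁ x ≠ ω₂ x with hM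
  have hdM : fam ω₁ i \ M = fam ω₂ i \ M := by
    ext a
    simp only [Finset.mem_sdiff, mem_fam, hM, Finset.mem_filter, Finset.mem_univ,
      true_and, not_not]
    constructor
    · rintro ⟨h1, h2⟩; exact ⟨by rw [← h2]; exact h1, h2⟩
    · rintro ⟨h1, h2⟩; exact ⟨by rw [h2]; exact h1, h2⟩
  have e1 := Finset.card_sdiff_add_card_inter (fam ω₁ i) M
  have e2 := Finset.card_sdiff_add_card_inter (fam ω₂ i) M
  rw [hdM] at e1
  have := hbal1 i
  have := hbal2 i
  omega

end GLUE

theorem exists_dynamic_pricing_two_optimal_allocations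
    {X I : Type*} [Fintype X] [DecidableEq X] [Fintype I] [DecidableEq I]
    (k : I → ℕ) (hk : ∀ i, 1 ≤ k i) (hsum : ∑ i, k i = Fintype.card X)
    (v : I → X → ℝ) (hv : ∀ i x, 0 < v i x)
    (hex : ∃ O : I → Finset X, IsAllocation k O)
    (htwo : ∀ O₁ O₂ O₃ : I → Finset X,
      IsOptimal v k O₁ → IsOptimal v k O₂ → IsOptimal v k O₃ →
      O₁ = O₂ ∨ O₁ = O₃ ∨ O₂ = O₃) :
    ∃ p : X → ℝ, (∀ x, 0 < p x) ∧
      ∀ i, ∀ S : Finset X,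
        (∀ S' : Finset X,
          bundleValue (k i) (v i) S' - ∑ x ∈ S', p x ≤
            bundleValue (k i) (v i) S - ∑ x ∈ S, p x) →
        ∃ O : I → Finset X, IsOptimal v k O ∧ O i = S := by
  classical
  rcases isEmpty_or_nonempty I with hIe | hIne
  · exact ⟨fun _ => 1, fun _ => one_pos, fun i => (IsEmpty.false i).elim⟩
  haveI := hIne
  have hXne : Nonempty X := by
    rcases isEmpty_or_nonempty X with hXe | h
    · exfalso
      obtain ⟨i⟩ := hIne
      have h0 : Fintype.card X = 0 := Fintype.card_eq_zero
      rw [h0] at hsum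
      have h1 : 1 ≤ ∑ i, k i :=
        le_trans (hk i) (Finset.single_le_sum (f := k) (fun _ _ => Nat.zero_le _) (mem_univ i))
      omega
    · exact h
  haveI := hXne
  -- optimal allocation
  have h𝒜ne : (univ.filter (fun O : I → Finset X => IsAllocation k O)).Nonempty := by
    obtain ⟨O, hO⟩ := hex
    exact ⟨O, Finset.mem_filter.mpr ⟨mem_univ _, hO⟩⟩
  obtain ⟨O₁, hO₁mem, hO₁max⟩ :=
    Finset.exists_max_image (univ.filter (fun O : I → Finset X => IsAllocation k O))
      (socialWelfare v k) h𝒜ne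
  have hO₁alloc : IsAllocation k O₁ := (Finset.mem_filter.mp hO₁mem).2
  have hO₁opt : IsOptimal v k O₁ :=
    ⟨hO₁alloc, fun O' hO' => hO₁max O' (Finset.mem_filter.mpr ⟨mem_univ _, hO'⟩)⟩
  obtain ⟨ω₁, hfam₁⟩ := exists_owner k O₁ hO₁alloc
  have hbal₁ : ∀ j, (fam ω₁ j).card = k j := by
    intro j
    rw [hfam₁]
    exact hO₁alloc.1 j
  have hfam₁opt : IsOptimal v k (fam ω₁) := by rw [hfam₁]; exact hO₁opt
  have hopt' : ∀ ω : X → I, (∀ j, (fam ω j).card = k j) → swSum v ω ≤ swSum v ω₁ := by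
    intro ω hb
    have h1 := hO₁opt.2 (fam ω) (alloc_fam k ω hb)
    rw [sw_fam k v hv ω hb] at h1
    rw [← hfam₁, sw_fam k v hv ω₁ hbal₁] at h1
    exact h1
  have hoptfam : ∀ ω₃ : X → I, (∀ j, (fam ω₃ j).card = k j) → swSum v ω₃ = swSum v ω₁ →
      IsOptimal v k (fam ω₃) := by
    intro ω₃ hb hs
    refine ⟨alloc_fam k ω₃ hb, ?_⟩
    intro O' hO'
    have h1 := hO₁opt.2 O' hO'
    rw [sw_fam k v hv ω₃ hb, hs, ← sw_fam k v hv ω₁ hbal₁, hfam₁]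
    exact h1
  -- second optimum
  obtain ⟨ω₂, hbal₂, hsw₂, hfam₂opt, honly⟩ :
      ∃ ω₂ : X → I, (∀ j, (fam ω₂ j).card = k j) ∧ swSum v ω₂ = swSum v ω₁ ∧
        IsOptimal v k (fam ω₂) ∧
        (∀ ω₃ : X → I, (∀ j, (fam ω₃ j).card = k j) → swSum v ω₃ = swSum v ω₁ →
          ω₃ = ω₁ ∨ ω₃ = ω₂) := by
    by_cases hU : ∀ O', IsOptimal v k O' → O' = O₁
    · refine ⟨ω₁, hbal₁, rfl, hfam₁opt, ?_⟩
      intro ω₃ hb hs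
      left
      apply fam_inj
      rw [hfam₁]
      exact hU (fam ω₃) (hoptfam ω₃ hb hs)
    · push_neg at hU
      obtain ⟨O₂, hO₂opt, hO₂ne⟩ := hU
      obtain ⟨ω₂, hfam₂⟩ := exists_owner k O₂ hO₂opt.1
      have hbal₂ : ∀ j, (fam ω₂ j).card = k j := by
        intro j; rw [hfam₂]; exact hO₂opt.1.1 j
      have hsw₂ : swSum v ω₂ = swSum v ω₁ := by
        have h1 := hO₁opt.2 O₂ hO₂opt.1
        have h2 := hO₂opt.2 O₁ hO₁opt.1
        have h3 : socialWelfare v k O₂ = socialWelfare v k O₁ := le_antisymm h1 h2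
        rw [← hfam₂, ← hfam₁, sw_fam k v hv ω₂ hbal₂, sw_fam k v hv ω₁ hbal₁] at h3
        exact h3
      refine ⟨ω₂, hbal₂, hsw₂, by rw [hfam₂]; exact hO₂opt, ?_⟩
      intro ω₃ hb hs
      rcases htwo O₁ O₂ (fam ω₃) hO₁opt hO₂opt (hoptfam ω₃ hb hs) with h | h | h
      · exact absurd h.symm hO₂ne
      · left; apply fam_inj; rw [hfam₁]; exact h.symm
      · right; apply fam_inj; rw [hfam₂]; exact h.symm
  -- injectivity facts
  have hinj₁ := owner_inj k v ω₁ ω₂ hbal₁ hbal₂ hopt' hsw₂ honly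
  have hopt₂ : ∀ ω : X → I, (∀ j, (fam ω j).card = k j) → swSum v ω ≤ swSum v ω₂ := by
    intro ω hb; rw [hsw₂]; exact hopt' ω hb
  have honly₂ : ∀ ω₃ : X → I, (∀ j, (fam ω₃ j).card = k j) → swSum v ω₃ = swSum v ω₂ →
      ω₃ = ω₂ ∨ ω₃ = ω₁ := by
    intro ω₃ hb hs
    exact (honly ω₃ hb (by rw [hs, hsw₂])).symm
  have hinj₂ := owner_inj k v ω₂ ω₁ hbal₂ hbal₁ hopt₂ hsw₂.symm honly₂
  -- constants
  obtain ⟨i⟩ := hIne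
  obtain ⟨x₀⟩ := hXne
  set vmax : ℝ := ((univ : Finset (I × X)).image (fun p => v p.1 p.2)).max'
    (Finset.Nonempty.image ⟨(i, x₀), mem_univ _⟩ _) with hvmaxdef
  have hvmax : ∀ i x, v i x ≤ vmax := by
    intro i x
    apply Finset.le_max'
    exact Finset.mem_image_of_mem _ (mem_univ (i, x))
  have hvmax0 : 0 ≤ vmax := le_trans (hv i x₀).le (hvmax i x₀)
  set B : ℝ := ((Fintype.card X : ℝ) + (Fintype.card I : ℝ)) * vmax + 1 with hBdef
  have hB : (Fintype.card X : ℝ) * vmax + (Fintype.card I : ℝ) * vmax < B := by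
    rw [hBdef]; ring_nf; linarith
  have hBpos : 0 < B := by
    rw [hBdef]
    have : 0 ≤ ((Fintype.card X : ℝ) + (Fintype.card I : ℝ)) * vmax := by positivity
    linarith
  set c : I → I → ℝ := fun j i' => if i' = j then -B else
    ((insert (-B) ((fam ω₁ j).image
      (fun y => if ω₁ y ≠ ω₂ y ∧ ω₂ y = i' then -(v j y) else v i' y - v j y))).max'
      (Finset.insert_nonempty _ _)) with hcdef
  have hcle : ∀ j i', c j i' ≤ vmax := by
    intro j i'
    simp only [hcdef]
    by_cases hij : i' = j
    · rw [if_pos hij]; linarith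
    · rw [if_neg hij]
      apply Finset.max'_le
      intro y hy
      rcases Finset.mem_insert.mp hy with rfl | hy
      · linarith
      · obtain ⟨z, hz, rfl⟩ := Finset.mem_image.mp hy
        by_cases hdz : ω₁ z ≠ ω₂ z ∧ ω₂ z = i'
        · rw [if_pos hdz]
          have := hv j z
          linarith
        · rw [if_neg hdz]
          have := hv j z
          have := hvmax i' z
          linarith
  have hcases : ∀ j i', c j i' = -B ∨ ∃ y, ω₁ y = j ∧ i' ≠ j ∧
      ((¬(ω₁ y ≠ ω₂ y ∧ ω₂ y = i') ∧ c j i' = v i' y - v j y) ∨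
       ((ω₁ y ≠ ω₂ y ∧ ω₂ y = i') ∧ c j i' = -(v j y))) := by
    intro j i'
    simp only [hcdef]
    by_cases hij : i' = j
    · left; rw [if_pos hij]
    · rw [if_neg hij]
      have hmem := Finset.max'_mem (insert (-B) ((fam ω₁ j).image
        (fun y => if ω₁ y ≠ ω₂ y ∧ ω₂ y = i' then -(v j y) else v i' y - v j y)))
        (Finset.insert_nonempty _ _)
      rcases Finset.mem_insert.mp hmem with h | h
      · left; exact h
      · obtain ⟨z, hz, hval⟩ := Finset.mem_image.mp h
        right
        refine ⟨z, mem_fam.mp hz, hij, ?_⟩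
        by_cases hdz : ω₁ z ≠ ω₂ z ∧ ω₂ z = i'
        · right
          refine ⟨hdz, ?_⟩
          rw [← hval, if_pos hdz]
        · left
          refine ⟨hdz, ?_⟩
          rw [← hval, if_neg hdz]
  -- key: define c-based value bound lemma
  have hcge : ∀ j i' (y : X), ω₁ y = j → i' ≠ j →
      (if ω₁ y ≠ ω₂ y ∧ ω₂ y = i' then -(v j y) else v i' y - v j y) ≤ c j i' := by
    intro j i' y hy hij
    simp only [hcdef, if_neg hij]
    apply Finset.le_max'
    exact Finset.mem_insert_of_mem (Finset.mem_image_of_mem _ (mem_fam.mpr hy))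
  -- potential
  have hcyc := negcyc k v ω₁ ω₂ c B vmax hv hbal₁ hopt' honly hvmax hvmax0 hB hcle hcases
  obtain ⟨Δ, hΔ₀⟩ := potential (univ : Finset I) c Finset.univ_nonempty
    (fun a l _ _ hnd => hcyc a l hnd)
  have hΔ : ∀ a b : I, Δ a + c a b < Δ b := fun a b => hΔ₀ a (mem_univ a) b (mem_univ b)
  -- key inequalities
  have hK1 : ∀ j i' (y : X), ω₁ y = j → i' ≠ j → ¬(ω₁ y ≠ ω₂ y ∧ ω₂ y = i') →
      Δ j + (v i' y - v j y) < Δ i' := by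
    intro j i' y hy hij hnd
    have h1 := hcge j i' y hy hij
    rw [if_neg hnd] at h1
    have h2 := hΔ j i'
    linarith
  have hK2 : ∀ j i' (y : X), ω₁ y = j → Δ j - v j y < Δ i' := by
    intro j i' y hy
    by_cases hij : i' = j
    · subst hij
      have := hv i' y
      linarith
    · have h1 := hcge j i' y hy hij
      have h2 := hΔ j i'
      by_cases hnd : ω₁ y ≠ ω₂ y ∧ ω₂ y = i'
      · rw [if_pos hnd] at h1
        linarith
      · rw [if_neg hnd] at h1
        have := hv i' y
        linarith
  -- epsilon
  set slack : I × I × X → ℝ := fun q =>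
    if ω₁ q.2.2 = q.2.1 ∧ q.1 ≠ q.2.1 ∧ ¬(ω₁ q.2.2 ≠ ω₂ q.2.2 ∧ ω₂ q.2.2 = q.1)
    then Δ q.1 - Δ q.2.1 - (v q.1 q.2.2 - v q.2.1 q.2.2) else 1 with hslackdef
  set slack2 : I × I × X → ℝ := fun q =>
    if ω₁ q.2.2 = q.2.1 then v q.2.1 q.2.2 - Δ q.2.1 + Δ q.1 else 1 with hslack2def
  set ε : ℝ := (((univ : Finset (I × I × X)).image (fun q => min (slack q) (slack2 q))).min'
    (Finset.Nonempty.image ⟨(i, i, x₀), mem_univ _⟩ _)) / 3 with hεdef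
  have hεpos : 0 < ε := by
    rw [hεdef]
    have h1 : ∀ q : I × I × X, 0 < min (slack q) (slack2 q) := by
      intro q
      apply lt_min
      · simp only [hslackdef]
        by_cases hcond : ω₁ q.2.2 = q.2.1 ∧ q.1 ≠ q.2.1 ∧
            ¬(ω₁ q.2.2 ≠ ω₂ q.2.2 ∧ ω₂ q.2.2 = q.1)
        · simp only [if_pos hcond]
          have := hK1 q.2.1 q.1 q.2.2 hcond.1 hcond.2.1 hcond.2.2
          linarith
        · simp only [if_neg hcond]; norm_num
      · simp only [hslack2def]
        by_cases hcond : ω₁ q.2.2 = q.2.1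
        · simp only [if_pos hcond]
          have := hK2 q.2.1 q.1 q.2.2 hcond
          linarith
        · simp only [if_neg hcond]; norm_num
    have h2 : 0 < (((univ : Finset (I × I × X)).image (fun q => min (slack q) (slack2 q))).min'
        (Finset.Nonempty.image ⟨(i, i, x₀), mem_univ _⟩ _)) := by
      obtain ⟨q, _, hval⟩ := Finset.mem_image.mp (Finset.min'_mem
        (((univ : Finset (I × I × X)).image (fun q => min (slack q) (slack2 q))))
        (Finset.Nonempty.image ⟨(i, i, x₀), mem_univ _⟩ _))
      rw [← hval]
      exact h1 q
    linarith
  have hε1 : ∀ i' j (y : X), ω₁ y = j → i' ≠ j → ¬(ω₁ y ≠ ω₂ y ∧ ω₂ y = i') →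
      3 * ε ≤ Δ i' - Δ j - (v i' y - v j y) := by
    intro i' j y hy hij hnd
    have hle : (((univ : Finset (I × I × X)).image (fun q => min (slack q) (slack2 q))).min'
        (Finset.Nonempty.image ⟨(i, i, x₀), mem_univ _⟩ _))
        ≤ min (slack (i', j, y)) (slack2 (i', j, y)) :=
      Finset.min'_le _ _ (Finset.mem_image_of_mem _ (mem_univ _))
    have h1 : slack (i', j, y) = Δ i' - Δ j - (v i' y - v j y) := by
      simp only [hslackdef]
      exact if_pos ⟨hy, hij, hnd⟩
    have h2 := min_le_left (slack (i', j, y)) (slack2 (i', j, y))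
    have h3 := le_trans hle h2
    rw [h1] at h3
    rw [hεdef]
    linarith
  have hε2 : ∀ i' j (y : X), ω₁ y = j → 3 * ε ≤ v j y - Δ j + Δ i' := by
    intro i' j y hy
    have hle : (((univ : Finset (I × I × X)).image (fun q => min (slack q) (slack2 q))).min'
        (Finset.Nonempty.image ⟨(i, i, x₀), mem_univ _⟩ _))
        ≤ min (slack (i', j, y)) (slack2 (i', j, y)) :=
      Finset.min'_le _ _ (Finset.mem_image_of_mem _ (mem_univ _))
    have h1 : slack2 (i', j, y) = v j y - Δ j + Δ i' := by
      simp only [hslack2def]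
      exact if_pos hy
    have h2 := min_le_right (slack (i', j, y)) (slack2 (i', j, y))
    have h3 := le_trans hle h2
    rw [h1] at h3
    rw [hεdef]
    linarith
  -- t
  set t : ℝ := ((univ.image Δ).min' (Finset.Nonempty.image ⟨i, mem_univ _⟩ _)) - 2 * ε
    with htdef
  have htle : ∀ i', t ≤ Δ i' - 2 * ε := by
    intro i'
    rw [htdef]
    have := Finset.min'_le (univ.image Δ) (Δ i') (Finset.mem_image_of_mem _ (mem_univ i'))
    linarith
  obtain ⟨imin, _, himin⟩ := Finset.mem_image.mp (Finset.min'_mem (univ.image Δ)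
    (Finset.Nonempty.image ⟨i, mem_univ _⟩ _))
  -- out items
  have hfamne : ∀ i', (fam ω₁ i').Nonempty := by
    intro i'
    apply Finset.card_pos.mp
    rw [hbal₁ i']
    exact hk i'
  set Mset : Finset X := univ.filter (fun x => ω₁ x ≠ ω₂ x) with hMsetdef
  set out : I → X := fun i' =>
    if h : ((fam ω₁ i') ∩ Mset).Nonempty then h.choose else (hfamne i').choose with houtdef
  have hout_mem : ∀ i', out i' ∈ fam ω₁ i' := by
    intro i'
    simp only [houtdef]
    by_cases h : ((fam ω₁ i') ∩ Mset).Nonempty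
    · simp only [dif_pos h]
      exact (Finset.mem_inter.mp h.choose_spec).1
    · simp only [dif_neg h]
      exact (hfamne i').choose_spec
  have hout_M : ∀ i', ((fam ω₁ i') ∩ Mset).Nonempty → out i' ∈ Mset := by
    intro i' h
    simp only [houtdef]
    simp only [dif_pos h]
    exact (Finset.mem_inter.mp h.choose_spec).2
  have hout_uniq : ∀ i' x, x ∈ fam ω₁ i' → x ∈ Mset → x = out i' := by
    intro i' x hxf hxM
    have hne : ((fam ω₁ i') ∩ Mset).Nonempty := ⟨x, Finset.mem_inter.mpr ⟨hxf, hxM⟩⟩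
    have houtM := hout_M i' hne
    have houtf := hout_mem i'
    apply hinj₁ x (out i')
    · exact (Finset.mem_filter.mp hxM).2
    · exact (Finset.mem_filter.mp houtM).2
    · rw [mem_fam.mp hxf, mem_fam.mp houtf]
  -- prices
  set p : X → ℝ := fun x =>
    v (ω₁ x) x - Δ (ω₁ x) + t + (if x = out (ω₁ x) then ε else 0) with hpdef
  have hp : ∀ x, 0 < p x := by
    intro x
    simp only [hpdef]
    have h1 := hε2 imin (ω₁ x) x rfl
    rw [himin] at h1
    have h2 : (0:ℝ) ≤ (if x = out (ω₁ x) then ε else 0) := by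
      by_cases h : x = out (ω₁ x)
      · rw [if_pos h]; exact hεpos.le
      · rw [if_neg h]
    rw [htdef]
    linarith
  refine ⟨p, hp, ?_⟩
  intro i' S hS
  -- demand analysis for player i'
  set a : X := out i' with hadef
  set C : Finset X := (fam ω₁ i').erase a with hCdef
  have haC : a ∉ C := Finset.notMem_erase _ _
  have hafam : a ∈ fam ω₁ i' := hout_mem i'
  have hωa : ω₁ a = i' := mem_fam.mp hafam
  have hcard : C.card = k i' - 1 := by
    rw [hCdef, Finset.card_erase_of_mem hafam, hbal₁ i']
  -- the candidate incoming item
  have hsC : ∀ x ∈ C, v i' x - p x = Δ i' - t := by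
    intro x hx
    have hxfam : x ∈ fam ω₁ i' := Finset.mem_of_mem_erase hx
    have hωx : ω₁ x = i' := mem_fam.mp hxfam
    have hxa : x ≠ a := (Finset.mem_erase.mp hx).1
    have hxout : x ≠ out i' := by rw [← hadef]; exact hxa
    simp only [hpdef, hωx]
    rw [if_neg hxout]
    ring
  have hsa : v i' a - p a = Δ i' - t - ε := by
    have hifa : (if a = out (ω₁ a) then ε else 0) = ε := by
      rw [if_pos]
      rw [hωa, ← hadef]
    simp only [hpdef]
    rw [hifa, hωa]
    ring
  have h2 : 0 < v i' a - p a := by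
    rw [hsa]
    have := htle i'
    linarith
  have h1 : ∀ x ∈ C, v i' a - p a < v i' x - p x := by
    intro x hx
    rw [hsa, hsC x hx]
    linarith
  by_cases hbex : ∃ x, (ω₁ x ≠ ω₂ x) ∧ ω₂ x = i'
  case neg =>
    -- no incoming item: demanded must be fam ω₁ i'
    have h3 : ∀ y, y ∉ C → y ≠ a → y ≠ a → v i' y - p y < v i' a - p a := by
      intro y hyC hya _
      have hωy : ω₁ y ≠ i' := by
        intro h
        exact hyC (Finset.mem_erase.mpr ⟨hya, mem_fam.mpr h⟩)
      have hnd : ¬(ω₁ y ≠ ω₂ y ∧ ω₂ y = i') := by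
        intro hcon
        exact hbex ⟨y, hcon⟩
      have hsl := hε1 i' (ω₁ y) y rfl (fun h => hωy h.symm) hnd
      have h2' : (0:ℝ) ≤ (if y = out (ω₁ y) then ε else 0) := by
        by_cases h : y = out (ω₁ y)
        · rw [if_pos h]; exact hεpos.le
        · rw [if_neg h]
      rw [hsa]; simp only [hpdef]
      have : v i' y - (v (ω₁ y) y - Δ (ω₁ y) + t + (if y = out (ω₁ y) then ε else 0))
          ≤ v i' y - v (ω₁ y) y + Δ (ω₁ y) - t := by linarith
      linarith
    rcases demand_lemma (hk i') hp (hv i') haC haC hcard h1 h2 h3 hS with h | h <;>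
    · refine ⟨fam ω₁, hfam₁opt, ?_⟩
      rw [h, hCdef, Finset.insert_erase hafam]
  case pos =>
    set b : X := hbex.choose with hbdef
    have hbspec : (ω₁ b ≠ ω₂ b) ∧ ω₂ b = i' := hbex.choose_spec
    have hbM : b ∈ Mset := Finset.mem_filter.mpr ⟨mem_univ _, hbspec.1⟩
    have hωb : ω₁ b ≠ i' := by
      rw [← hbspec.2]; exact hbspec.1
    have hbfam : b ∉ fam ω₁ i' := fun h => hωb (mem_fam.mp h)
    have hbC : b ∉ C := fun h => hbfam (Finset.mem_of_mem_erase h)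
    have h3 : ∀ y, y ∉ C → y ≠ a → y ≠ b → v i' y - p y < v i' a - p a := by
      intro y hyC hya hyb
      have hωy : ω₁ y ≠ i' := by
        intro h
        exact hyC (Finset.mem_erase.mpr ⟨hya, mem_fam.mpr h⟩)
      have hnd : ¬(ω₁ y ≠ ω₂ y ∧ ω₂ y = i') := by
        intro hcon
        apply hyb
        apply hinj₂ y b
        · exact fun h => hcon.1 h.symm
        · exact fun h => hbspec.1 h.symm
        · rw [hcon.2, hbspec.2]
      have hsl := hε1 i' (ω₁ y) y rfl (fun h => hωy h.symm) hnd
      have h2' : (0:ℝ) ≤ (if y = out (ω₁ y) then ε else 0) := by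
        by_cases h : y = out (ω₁ y)
        · rw [if_pos h]; exact hεpos.le
        · rw [if_neg h]
      rw [hsa]; simp only [hpdef]
      have : v i' y - (v (ω₁ y) y - Δ (ω₁ y) + t + (if y = out (ω₁ y) then ε else 0))
          ≤ v i' y - v (ω₁ y) y + Δ (ω₁ y) - t := by linarith
      linarith
    rcases demand_lemma (hk i') hp (hv i') haC hbC hcard h1 h2 h3 hS with h | h
    · refine ⟨fam ω₁, hfam₁opt, ?_⟩
      rw [h, hCdef, Finset.insert_erase hafam]
    · refine ⟨fam ω₂, hfam₂opt, ?_⟩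
      rw [h]
      -- fam ω₂ i' = insert b C
      have hbin : b ∈ fam ω₂ i' ∩ Mset :=
        Finset.mem_inter.mpr ⟨mem_fam.mpr hbspec.2, hbM⟩
      have hcardM := card_inter_M k ω₁ ω₂ hbal₁ hbal₂ i'
      have hne1 : ((fam ω₁ i') ∩ Mset).Nonempty := by
        apply Finset.card_pos.mp
        rw [hMsetdef] at *
        rw [hcardM]
        exact Finset.card_pos.mpr ⟨b, hbin⟩
      have haM : a ∈ Mset := hout_M i' hne1
      have haM' : ω₁ a ≠ ω₂ a := (Finset.mem_filter.mp haM).2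
      symm
      ext x
      simp only [Finset.mem_insert, mem_fam]
      constructor
      · rintro (rfl | hxC)
        · exact hbspec.2
        · have hxfam : x ∈ fam ω₁ i' := Finset.mem_of_mem_erase hxC
          have hxa : x ≠ a := (Finset.mem_erase.mp hxC).1
          have hxM : ¬(ω₁ x ≠ ω₂ x) := by
            intro hxM
            exact hxa (hout_uniq i' x hxfam (Finset.mem_filter.mpr ⟨mem_univ _, hxM⟩))
          push_neg at hxM
          rw [← hxM]
          exact mem_fam.mp hxfam
      · intro hx2
        by_cases hxM : ω₁ x ≠ ω₂ x
        · left
          apply hinj₂ x b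
          · exact fun hh => hxM hh.symm
          · exact fun hh => hbspec.1 hh.symm
          · rw [hx2, hbspec.2]
        · right
          push_neg at hxM
          have hx1 : ω₁ x = i' := by rw [hxM]; exact hx2
          refine Finset.mem_erase.mpr ⟨?_, mem_fam.mpr hx1⟩
          intro hxa
          subst hxa
          exact haM' (by rw [hxM])
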